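/- Let V be a ℚ-algebra, let h, u ∈ V, let m ≥ 0 be an integer, and let n be a nonzero rational number. Assume u·hᵐ·u = n·u and u·hˡ·u = 0 for every integer l with 0 ≤ l < m. For 0 ≤ i ≤ m set πᵢ := n⁻¹·h^(m−i)·u·hⁱ. Then each πᵢ is idempotent, and πᵢ·πⱼ = 0 whenever i < j. -/
import Mathlib


/-- The algebraic computation underlying Proposition `semiorthogonality` of the paper:
in a ℚ-algebra `V`, if `u·hᵐ·u = n·u` and `u·hˡ·u = 0` for all `0 ≤ l < m` (with `n` a
nonzero rational), then the elements `πᵢ := n⁻¹·h^(m−i)·u·hⁱ` (`0 ≤ i ≤ m`) are idempotents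
with `πᵢ·πⱼ = 0` whenever `i < j`. -/
theorem stmt_6 {V : Type*} [Ring V] [Algebra ℚ V] (h u : V) (m : ℕ) (n : ℚ) (hn : n ≠ 0)
    (hm : u * h ^ m * u = n • u)
    (hl : ∀ l : ℕ, l < m → u * h ^ l * u = 0)
    (π : ℕ → V) (hπ : ∀ i, π i = n⁻¹ • (h ^ (m - i) * u * h ^ i)) :
    (∀ i, i ≤ m → π i * π i = π i) ∧
    (∀ i j, i ≤ m → j ≤ m → i < j → π i * π j = 0) := by
  have key : ∀ i j : ℕ, π i * π j =
      (n⁻¹ * n⁻¹) • (h ^ (m - i) * (u * h ^ (i + (m - j)) * u) * h ^ j) := by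
    intro i j
    rw [hπ i, hπ j, smul_mul_smul_comm, pow_add]
    simp [mul_assoc]
  constructor
  · intro i hi
    rw [key i i, Nat.add_sub_cancel' hi, hm, hπ i, mul_smul_comm, smul_mul_assoc,
      smul_smul]
    congr 1
    field_simp
  · intro i j hi hj hij
    rw [key i j, hl _ (by omega)]
    simp
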